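/- Fix q ∈ (0,1) and r ≥ 1. Then ∫_{[0,1]^r} q^{x_1} ∏_{i=2}^r (q^{x_i} q^{1[x_i < x_{i-1}]}) dx_1...dx_r = C_q^{-r} A_r(q)/r!, where C_q = log(1/q)/(1-q) and A_r(q) is the r-th Eulerian polynomial Σ_{σ ∈ S_r} q^{d(σ)}. -/

import Mathlib

open MeasureTheory

/-- Number of descents of a permutation of `Fin r`. -/
def descentNum {r : ℕ} (σ : Equiv.Perm (Fin r)) : ℕ :=
  (Finset.univ.filter (fun p : Fin r × Fin r =>
    (p.2 : ℕ) = (p.1 : ℕ) + 1 ∧ σ p.2 < σ p.1)).card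

/-- The `r`-th Eulerian polynomial `A_r(q) = Σ_{σ ∈ S_r} q^{d(σ)}`. -/
noncomputable def eulerianPoly (r : ℕ) (q : ℝ) : ℝ :=
  ∑ σ : Equiv.Perm (Fin r), q ^ descentNum σ

/-- Number of descents of the sequence `x_1, …, x_r`: indices `i ≥ 2` with `x_i < x_{i-1}`. -/
noncomputable def seqDescentNum {r : ℕ} (x : Fin r → ℝ) : ℕ :=
  (Finset.univ.filter (fun p : Fin r × Fin r =>
    (p.2 : ℕ) = (p.1 : ℕ) + 1 ∧ x p.2 < x p.1)).card

namespace DescentAux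

/-- An injective tuple can be sorted by a unique permutation. -/
lemma existsUnique_strictMono {r : ℕ} (x : Fin r → ℝ) (hx : Function.Injective x) :
    ∃! σ : Equiv.Perm (Fin r), StrictMono (x ∘ σ) := by
  refine ⟨Tuple.sort x, (Tuple.monotone_sort x).strictMono_of_injective
    (hx.comp (Tuple.sort x).injective), ?_⟩
  intro τ hτ
  have h := Tuple.unique_monotone hτ.monotone
    ((Tuple.monotone_sort x).strictMono_of_injective
      (hx.comp (Tuple.sort x).injective)).monotone
  ext a : 1
  exact hx (congrFun h a)

lemma seqDescentNum_eq {r : ℕ} (x : Fin r → ℝ) (σ : Equiv.Perm (Fin r))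
    (h : StrictMono (x ∘ σ)) : seqDescentNum x = descentNum σ⁻¹ := by
  unfold seqDescentNum descentNum
  congr 1
  apply Finset.filter_congr
  intro p _
  have key : ∀ a b : Fin r, (x a < x b ↔ σ⁻¹ a < σ⁻¹ b) := by
    intro a b
    have ha : x a = (x ∘ σ) (σ⁻¹ a) := by simp
    have hb : x b = (x ∘ σ) (σ⁻¹ b) := by simp
    rw [ha, hb, h.lt_iff_lt]
  simp [key]

lemma volume_eq_coord_null {r : ℕ} (i j : Fin r) (hij : i ≠ j) :
    volume {x : Fin r → ℝ | x i = x j} = 0 := by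
  match r with
  | 0 => exact i.elim0
  | n + 1 =>
    let e := MeasurableEquiv.piFinSuccAbove (fun _ : Fin (n+1) => ℝ) i
    have he : MeasurePreserving e volume volume :=
      volume_preserving_piFinSuccAbove (fun _ : Fin (n+1) => ℝ) i
    obtain ⟨k, hk⟩ := Fin.exists_succAbove_eq hij.symm
    set t : Set (ℝ × (Fin n → ℝ)) := {p | p.1 = p.2 k} with ht
    have htm : MeasurableSet t :=
      measurableSet_eq_fun measurable_fst ((measurable_pi_apply _).comp measurable_snd)
    have hpre : ⇑e ⁻¹' t = {x : Fin (n+1) → ℝ | x i = x j} := by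
      ext x
      simp only [Set.mem_preimage, Set.mem_setOf_eq, t, e,
        MeasurableEquiv.piFinSuccAbove, MeasurableEquiv.coe_mk]
      rw [show x i = x j ↔ x i = x (i.succAbove k) from by rw [hk]]
      exact Iff.rfl
    rw [← hpre, he.measure_preimage htm.nullMeasurableSet]
    have hv : (volume : Measure (ℝ × (Fin n → ℝ))) = Measure.prod volume volume := rfl
    rw [hv, Measure.prod_apply htm]
    have hz : ∀ a : ℝ, volume (Prod.mk a ⁻¹' t) = 0 := by
      intro a
      have h1 : Prod.mk a ⁻¹' t = {b : Fin n → ℝ | b k = a} := by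
        ext b; simp [t, eq_comm]
      rw [h1, volume_pi]
      exact Measure.pi_hyperplane _ _ _
    simp [hz]

lemma volume_not_injective_null (r : ℕ) :
    volume {x : Fin r → ℝ | ¬ Function.Injective x} = 0 := by
  have hsub : {x : Fin r → ℝ | ¬ Function.Injective x}
      ⊆ ⋃ (i : Fin r), ⋃ (j : Fin r), ⋃ (_ : i ≠ j), {x : Fin r → ℝ | x i = x j} := by
    intro x hx
    simp only [Set.mem_setOf_eq, Function.Injective, not_forall] at hx
    obtain ⟨i, j, hxy, hne⟩ := hx
    exact Set.mem_iUnion.2 ⟨i, Set.mem_iUnion.2 ⟨j, Set.mem_iUnion.2 ⟨hne, hxy⟩⟩⟩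
  refine measure_mono_null hsub ?_
  exact measure_iUnion_null fun i => measure_iUnion_null fun j =>
    measure_iUnion_null fun hij => volume_eq_coord_null i j hij

lemma measurableSet_strictMonoComp {r : ℕ} (σ : Equiv.Perm (Fin r)) :
    MeasurableSet {x : Fin r → ℝ | StrictMono (x ∘ σ)} := by
  have hs : {x : Fin r → ℝ | StrictMono (x ∘ σ)}
      = ⋂ (a : Fin r), ⋂ (b : Fin r), ⋂ (_ : a < b), {x : Fin r → ℝ | x (σ a) < x (σ b)} := by
    ext x; simp [StrictMono]
  rw [hs]
  exact MeasurableSet.iInter fun a => MeasurableSet.iInter fun b =>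
    MeasurableSet.iInter fun _ =>
      measurableSet_lt (measurable_pi_apply (σ a)) (measurable_pi_apply (σ b))

lemma measurableSet_strictMono {r : ℕ} :
    MeasurableSet {x : Fin r → ℝ | StrictMono x} := by
  have hs : {x : Fin r → ℝ | StrictMono x}
      = ⋂ (a : Fin r), ⋂ (b : Fin r), ⋂ (_ : a < b), {x : Fin r → ℝ | x a < x b} := by
    ext x; simp [StrictMono]
  rw [hs]
  exact MeasurableSet.iInter fun a => MeasurableSet.iInter fun b =>
    MeasurableSet.iInter fun _ =>
      measurableSet_lt (measurable_pi_apply a) (measurable_pi_apply b)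

/-- The cube. -/
def cube (r : ℕ) : Set (Fin r → ℝ) := Set.univ.pi (fun _ : Fin r => Set.Icc (0 : ℝ) 1)

lemma measurableSet_cube (r : ℕ) : MeasurableSet (cube r) :=
  MeasurableSet.univ_pi fun _ => measurableSet_Icc

lemma volume_cube (r : ℕ) : volume (cube r) = 1 := by
  rw [cube, volume_pi_pi]
  simp [Real.volume_Icc]

instance (r : ℕ) : IsFiniteMeasure (volume.restrict (cube r)) := by
  constructor
  rw [Measure.restrict_apply_univ, volume_cube]
  exact ENNReal.one_lt_top

/-- Permutation invariance of the simplex-slab integral. -/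
lemma perm_integral {r : ℕ} (q : ℝ) (σ : Equiv.Perm (Fin r)) :
    ∫ x in cube r ∩ {x : Fin r → ℝ | StrictMono (x ∘ σ)}, q ^ (∑ i, x i)
    = ∫ x in cube r ∩ {x : Fin r → ℝ | StrictMono x}, q ^ (∑ i, x i) := by
  let e := MeasurableEquiv.piCongrLeft (fun _ : Fin r => ℝ) (σ : Fin r ≃ Fin r)
  have he : MeasurePreserving e volume volume :=
    volume_measurePreserving_piCongrLeft (fun _ : Fin r => ℝ) (σ : Fin r ≃ Fin r)
  have heapp : ∀ (x : Fin r → ℝ) (jj : Fin r), e x jj = x (σ.symm jj) := by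
    intro x jj
    have h2 := Equiv.piCongrLeft_apply_apply (fun _ : Fin r => ℝ) (σ : Fin r ≃ Fin r) x (σ.symm jj)
    rw [Equiv.apply_symm_apply] at h2
    simpa [e, MeasurableEquiv.coe_piCongrLeft] using h2
  have hset : ⇑e ⁻¹' (cube r ∩ {x : Fin r → ℝ | StrictMono (x ∘ σ)})
      = cube r ∩ {x : Fin r → ℝ | StrictMono x} := by
    ext x
    simp only [Set.mem_preimage, Set.mem_inter_iff, cube, Set.mem_univ_pi, Set.mem_setOf_eq]
    have hcomp : (e x) ∘ σ = x := by ext a; simp [heapp]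
    constructor
    · rintro ⟨h1, h2⟩
      refine ⟨fun i => by simpa [heapp] using h1 (σ i), by rwa [hcomp] at h2⟩
    · rintro ⟨h1, h2⟩
      refine ⟨fun i => by simpa [heapp] using h1 (σ.symm i), by rwa [hcomp]⟩
  have key := he.setIntegral_preimage_emb e.measurableEmbedding
    (fun y => q ^ (∑ i, y i)) (cube r ∩ {x : Fin r → ℝ | StrictMono (x ∘ σ)})
  rw [← key, hset]
  refine setIntegral_congr_fun ((measurableSet_cube r).inter measurableSet_strictMono)
    (fun x _ => ?_)
  have hsum : ∑ i, e x i = ∑ i, x i := by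
    rw [show ∑ i, e x i = ∑ i, x (σ.symm i) from Finset.sum_congr rfl fun i _ => heapp x i]
    exact Equiv.sum_comp σ.symm x
  simp [hsum]

/-- Integrability of the exponential weight on the cube. -/
lemma integrable_rpow_sum {r : ℕ} (q : ℝ) (hq0 : 0 < q) (hq1 : q < 1) :
    Integrable (fun x : Fin r → ℝ => q ^ (∑ i, x i)) (volume.restrict (cube r)) := by
  have hm : Measurable (fun x : Fin r → ℝ => q ^ (∑ i, x i)) := by
    have h1 : Measurable (fun x : Fin r → ℝ => ∑ i, x i) :=
      Finset.measurable_sum _ fun i _ => measurable_pi_apply i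
    have h2 : ∀ x : Fin r → ℝ, q ^ (∑ i, x i) = Real.exp (Real.log q * ∑ i, x i) := by
      intro x; rw [Real.rpow_def_of_pos hq0]
    simp_rw [h2]
    exact Real.measurable_exp.comp (h1.const_mul _)
  refine Integrable.mono' (integrable_const 1) hm.aestronglyMeasurable ?_
  filter_upwards [ae_restrict_mem (measurableSet_cube r)] with x hx
  have hsum : 0 ≤ ∑ i, x i :=
    Finset.sum_nonneg fun i _ => (hx i (Set.mem_univ i)).1
  have h0 : (0:ℝ) ≤ q ^ (∑ i, x i) := (Real.rpow_pos_of_pos hq0 _).le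
  rw [Real.norm_eq_abs, abs_of_nonneg h0]
  exact Real.rpow_le_one hq0.le hq1.le hsum

/-- Decomposition of a cube integral according to the sorting permutation. -/
lemma split {r : ℕ} (q : ℝ) (hq0 : 0 < q) (hq1 : q < 1)
    (g : (Fin r → ℝ) → ℝ) (w : Equiv.Perm (Fin r) → ℝ)
    (hg : ∀ σ : Equiv.Perm (Fin r), ∀ x : Fin r → ℝ, StrictMono (x ∘ σ) →
      g x = q ^ (∑ i, x i) * w σ) :
    ∫ x in cube r, g x
      = (∑ σ : Equiv.Perm (Fin r), w σ) *
        ∫ x in cube r ∩ {x : Fin r → ℝ | StrictMono x}, q ^ (∑ i, x i) := by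
  classical
  have hae : ∀ᵐ x ∂(volume.restrict (cube r)), g x
      = ∑ σ : Equiv.Perm (Fin r),
          ({x : Fin r → ℝ | StrictMono (x ∘ σ)}).indicator
            (fun x => q ^ (∑ i, x i) * w σ) x := by
    have hnull : (volume.restrict (cube r)) {x : Fin r → ℝ | ¬ Function.Injective x} = 0 :=
      le_antisymm (le_trans (Measure.restrict_le_self _)
        (le_of_eq (volume_not_injective_null r))) zero_le
    have hinj : ∀ᵐ x ∂(volume.restrict (cube r)), Function.Injective x := by
      rw [ae_iff]
      simpa using hnull
    filter_upwards [hinj] with x hx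
    obtain ⟨σ₀, hσ₀, huniq⟩ := existsUnique_strictMono x hx
    have hsum := Finset.sum_eq_single_of_mem
      (f := fun σ : Equiv.Perm (Fin r) =>
        ({x : Fin r → ℝ | StrictMono (x ∘ σ)}).indicator
          (fun x => q ^ (∑ i, x i) * w σ) x)
      (s := Finset.univ) σ₀ (Finset.mem_univ σ₀)
      (fun τ _ hτ => Set.indicator_of_notMem
        (show x ∉ {y : Fin r → ℝ | StrictMono (y ∘ ⇑τ)} from fun hmem => hτ (huniq τ hmem)) _)
    exact ((hg σ₀ x hσ₀).trans (Set.indicator_of_mem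
      (show x ∈ {y : Fin r → ℝ | StrictMono (y ∘ ⇑σ₀)} from hσ₀)
      (fun x => q ^ (∑ i, x i) * w σ₀)).symm).trans hsum.symm
  have hint : ∀ σ : Equiv.Perm (Fin r),
      Integrable (({x : Fin r → ℝ | StrictMono (x ∘ σ)}).indicator
        (fun x => q ^ (∑ i, x i) * w σ)) (volume.restrict (cube r)) := by
    intro σ
    exact (((integrable_rpow_sum q hq0 hq1).mul_const (w σ)).indicator
      (measurableSet_strictMonoComp σ))
  rw [integral_congr_ae hae, integral_finset_sum _ fun σ _ => hint σ]
  have hterm : ∀ σ : Equiv.Perm (Fin r),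
      ∫ x in cube r, ({x : Fin r → ℝ | StrictMono (x ∘ σ)}).indicator
          (fun x => q ^ (∑ i, x i) * w σ) x
        = w σ * ∫ x in cube r ∩ {x : Fin r → ℝ | StrictMono x}, q ^ (∑ i, x i) := by
    intro σ
    rw [integral_indicator (measurableSet_strictMonoComp σ),
      Measure.restrict_restrict (measurableSet_strictMonoComp σ),
      Set.inter_comm]
    rw [integral_mul_const]
    rw [perm_integral q σ]
    ring
  simp_rw [hterm]
  rw [← Finset.sum_mul]

end DescentAux

/-- `∫_{[0,1]^r} q^{x_1} ∏_{i=2}^r (q^{x_i} q^{1[x_i < x_{i-1}]}) dx = C_q^{-r} A_r(q)/r!`,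
where `C_q = log(1/q)/(1-q)`. -/
theorem descent_integral (q : ℝ) (hq0 : 0 < q) (hq1 : q < 1) (r : ℕ) (hr : 1 ≤ r) :
    ∫ x in Set.univ.pi (fun _ : Fin r => Set.Icc (0 : ℝ) 1),
        q ^ (∑ i, x i) * q ^ seqDescentNum x
      = (Real.log (1 / q) / (1 - q))⁻¹ ^ r * eulerianPoly r q / (r.factorial : ℝ) := by
  classical
  have hlq : Real.log q ≠ 0 := by
    have := Real.log_neg hq0 hq1; linarith
  -- the one-dimensional integral
  have hone : ∫ t in Set.Icc (0:ℝ) 1, q ^ t = (q - 1) / Real.log q := by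
    rw [MeasureTheory.integral_Icc_eq_integral_Ioc, ← intervalIntegral.integral_of_le zero_le_one]
    have h : ∀ t : ℝ, q ^ t = Real.exp (Real.log q * t) := fun t => by
      rw [Real.rpow_def_of_pos hq0]
    simp_rw [h]
    rw [intervalIntegral.integral_comp_mul_left (fun u => Real.exp u) hlq]
    simp [Real.exp_log hq0, div_eq_inv_mul]
  set c : ℝ := (q - 1) / Real.log q with hc
  have hCq : (Real.log (1 / q) / (1 - q))⁻¹ = c := by
    rw [one_div, Real.log_inv, inv_div, hc,
      show (1 - q) = -(q - 1) by ring, neg_div_neg_eq]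
  -- the cube integral
  have hcube : ∫ x in DescentAux.cube r, q ^ (∑ i, x i) = c ^ r := by
    have hmeas := DescentAux.measurableSet_cube r
    rw [← integral_indicator hmeas]
    have key : ∀ x : Fin r → ℝ,
        (DescentAux.cube r).indicator
          (fun x => q ^ (∑ i, x i)) x
        = ∏ i, (Set.Icc (0:ℝ) 1).indicator (fun t => q ^ t) (x i) := by
      intro x
      by_cases hx : x ∈ DescentAux.cube r
      · rw [Set.indicator_of_mem hx]
        have h1 : ∀ i, (Set.Icc (0:ℝ) 1).indicator (fun t => q ^ t) (x i) = q ^ (x i) := by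
          intro i; exact Set.indicator_of_mem (hx i (Set.mem_univ i)) _
        simp_rw [h1]
        exact Real.rpow_sum_of_pos hq0 x Finset.univ
      · rw [Set.indicator_of_notMem hx]
        rw [DescentAux.cube, Set.mem_univ_pi] at hx
        push_neg at hx
        obtain ⟨i, hi⟩ := hx
        exact (Finset.prod_eq_zero (Finset.mem_univ i)
          (Set.indicator_of_notMem hi _)).symm
    simp_rw [key]
    rw [volume_pi, MeasureTheory.integral_fintype_prod_eq_pow (ι := Fin r)
      ((Set.Icc (0:ℝ) 1).indicator (fun t => q ^ t))]
    rw [integral_indicator measurableSet_Icc, Fintype.card_fin, hone]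
  -- decompose the cube integral
  set J : ℝ := ∫ x in DescentAux.cube r ∩ {x : Fin r → ℝ | StrictMono x}, q ^ (∑ i, x i) with hJ
  have hsplit1 : ∫ x in DescentAux.cube r, q ^ (∑ i, x i)
      = (r.factorial : ℝ) * J := by
    have h := DescentAux.split (r := r) q hq0 hq1 (fun x => q ^ (∑ i, x i))
      (fun _ => 1) (fun σ x _ => by ring)
    refine Eq.trans h ?_
    show _ = (r.factorial : ℝ) * J
    simp [Fintype.card_perm, hJ]
  have hJval : J = c ^ r / (r.factorial : ℝ) := by
    have hfac : (r.factorial : ℝ) ≠ 0 := Nat.cast_ne_zero.2 r.factorial_ne_zero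
    have hrJ : (r.factorial : ℝ) * J = c ^ r := by rw [← hsplit1, hcube]
    field_simp [← hrJ]
    linarith
  have hsplit2 : ∫ x in DescentAux.cube r, q ^ (∑ i, x i) * q ^ seqDescentNum x
      = eulerianPoly r q * J := by
    have h := DescentAux.split (r := r) q hq0 hq1
      (fun x => q ^ (∑ i, x i) * q ^ seqDescentNum x)
      (fun σ => q ^ descentNum σ⁻¹)
      (fun σ x hmono => by simp only [DescentAux.seqDescentNum_eq x σ hmono])
    refine Eq.trans h ?_
    congr 1
    rw [eulerianPoly]
    exact (Fintype.sum_equiv (Equiv.inv (Equiv.Perm (Fin r)))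
      (fun σ => q ^ descentNum σ⁻¹) (fun σ => q ^ descentNum σ) (fun σ => rfl))
  rw [show Set.univ.pi (fun _ : Fin r => Set.Icc (0 : ℝ) 1) = DescentAux.cube r from rfl]
  rw [hsplit2, hJval, hCq]
  ring
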